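/- In the exact WKB recursion, fix z₁∈Ω with Re z₁ > Re z₀, and for a holomorphic function f on Ω define ‖f‖ = sup_{ζ∈[z₀,z₁]} |f(ζ)| + ε sup_{ζ∈[z₀,z₁]} |f'(ζ)|, J(f)(z) = ∫_{[z₀,z]} ℋ(ζ) f(ζ) dζ, and I₊(f)(z) = ∫_{[z₀,z]} e^{2(ζ−z)/ε} ℋ(ζ) f(ζ) dζ. Then there exists a constant C>0, depending on ℋ and the segment [z₀,z₁] but not on ε, such that ‖J(I₊(f))‖ ≤ C ε ‖f‖ for every holomorphic f on Ω and every ε ∈ (0,1]. -/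

import Mathlib

open Complex Filter Set intervalIntegral MeasureTheory

noncomputable section

/-- Integral of `h` along the straight segment from `z₀` to `z`. -/
def segIntegral (z₀ z : ℂ) (h : ℂ → ℂ) : ℂ :=
  (z - z₀) * ∫ t in (0:ℝ)..1, h (z₀ + (t : ℂ) * (z - z₀))

/-- The operator `J(f)(z) = ∫_{[z₀,z]} ℋ(ζ) f(ζ) dζ`. -/
def wkbJ (H : ℂ → ℂ) (z₀ : ℂ) (f : ℂ → ℂ) (z : ℂ) : ℂ :=
  segIntegral z₀ z fun ζ => H ζ * f ζ

/-- The operator `I₊(f)(z) = ∫_{[z₀,z]} e^{2(ζ-z)/ε} ℋ(ζ) f(ζ) dζ`. -/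
def wkbIplus (H : ℂ → ℂ) (z₀ : ℂ) (ε : ℝ) (f : ℂ → ℂ) (z : ℂ) : ℂ :=
  (z - z₀) * ∫ t in (0:ℝ)..1,
    Complex.exp (2 * ((z₀ + (t : ℂ) * (z - z₀)) - z) / (ε : ℂ)) *
      H (z₀ + (t : ℂ) * (z - z₀)) * f (z₀ + (t : ℂ) * (z - z₀))

/-- The norm `‖f‖ = sup_{[z₀,z₁]} |f| + ε sup_{[z₀,z₁]} |f'|`. -/
def wkbNorm (ε : ℝ) (z₀ z₁ : ℂ) (f : ℂ → ℂ) : ℝ :=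
  sSup ((fun ζ => ‖f ζ‖) '' segment ℝ z₀ z₁) +
    ε * sSup ((fun ζ => ‖deriv f ζ‖) '' segment ℝ z₀ z₁)

lemma seg_mem_param {z₀ z₁ : ℂ} {u : ℝ} (hu : u ∈ Set.Icc (0:ℝ) 1) :
    z₀ + (u:ℂ) * (z₁ - z₀) ∈ segment ℝ z₀ z₁ := by
  rw [segment_eq_image']
  exact ⟨u, hu, by simp [Complex.real_smul]⟩

lemma seg_param_of_mem {z₀ z₁ z : ℂ} (hz : z ∈ segment ℝ z₀ z₁) :
    ∃ s ∈ Set.Icc (0:ℝ) 1, z = z₀ + (s:ℂ) * (z₁ - z₀) := by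
  rw [segment_eq_image'] at hz
  obtain ⟨s, hs, h⟩ := hz
  exact ⟨s, hs, by rw [← h]; simp [Complex.real_smul]⟩

lemma isCompact_seg (z₀ z₁ : ℂ) : IsCompact (segment ℝ z₀ z₁) := by
  rw [segment_eq_image']
  exact isCompact_Icc.image (by fun_prop)

lemma exp_integral_le {c : ℝ} (hc : 0 < c) :
    (∫ t in (0:ℝ)..1, Real.exp (c*(t-1))) ≤ 1/c := by
  have hd : ∀ t ∈ Set.uIcc (0:ℝ) 1, HasDerivAt (fun t => Real.exp (c*(t-1))/c)
      (Real.exp (c*(t-1))) t := by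
    intro t _
    have h1 : HasDerivAt (fun t : ℝ => c*(t-1)) c t := by
      simpa using ((hasDerivAt_id t).sub_const 1).const_mul c
    have := ((Real.hasDerivAt_exp (c*(t-1))).comp t h1).div_const c
    simpa [mul_div_assoc, mul_div_cancel_right₀ _ hc.ne'] using this
  rw [intervalIntegral.integral_eq_sub_of_hasDerivAt hd
    ((Real.continuous_exp.comp (by fun_prop)).intervalIntegrable 0 1)]
  have h2 : (0:ℝ) < Real.exp (c*(0-1)) := Real.exp_pos _
  have h3 : Real.exp (c*(1-1)) = 1 := by norm_num
  rw [h3]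
  rw [div_sub_div_same, div_le_div_iff₀ hc hc]
  nlinarith

lemma segIntegral_hasDerivAt {Ω : Set ℂ} (hΩopen : IsOpen Ω) (hΩconv : Convex ℝ Ω)
    {h : ℂ → ℂ} (hh : DifferentiableOn ℂ h Ω) {z₀ : ℂ} (hz₀ : z₀ ∈ Ω) {z : ℂ} (hz : z ∈ Ω) :
    HasDerivAt (fun w => segIntegral z₀ w h) (h z) z := by
  have hA : AnalyticOnNhd ℂ h Ω := hh.analyticOnNhd hΩopen
  have hdc : ContinuousOn (deriv h) Ω := (hA.deriv).continuousOn
  have hhc : ContinuousOn h Ω := hh.continuousOn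
  have hseg : segment ℝ z₀ z ⊆ Ω := hΩconv.segment_subset hz₀ hz
  obtain ⟨δ, hδpos, hδ⟩ := (isCompact_seg z₀ z).exists_cthickening_subset_open hΩopen hseg
  set K := Metric.cthickening δ (segment ℝ z₀ z) with hK
  have hKcomp : IsCompact K := IsCompact.cthickening (isCompact_seg z₀ z)
  -- membership of the deformed segment
  have hmem : ∀ x ∈ Metric.ball z δ, ∀ t ∈ Set.Icc (0:ℝ) 1, z₀ + (t:ℂ) * (x - z₀) ∈ K := by
    intro x hx t ht
    apply Metric.mem_cthickening_of_dist_le _ (z₀ + (t:ℂ)*(z - z₀)) δ _ (seg_mem_param ht)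
    have hd : dist (z₀ + (t:ℂ)*(x - z₀)) (z₀ + (t:ℂ)*(z - z₀)) = t * dist x z := by
      rw [Complex.dist_eq, Complex.dist_eq]
      have e : z₀ + (t:ℂ)*(x - z₀) - (z₀ + (t:ℂ)*(z - z₀)) = (t:ℂ) * (x - z) := by ring
      rw [e, norm_mul, Complex.norm_real, Real.norm_eq_abs, _root_.abs_of_nonneg ht.1]
    rw [hd]
    calc t * dist x z ≤ 1 * δ := by
          exact mul_le_mul ht.2 (le_of_lt (Metric.mem_ball.mp hx)) dist_nonneg zero_le_one
      _ = δ := one_mul δ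
  obtain ⟨C₁, hC₁⟩ := hKcomp.exists_bound_of_continuousOn (hdc.mono hδ)
  have hIsub : Set.uIoc (0:ℝ) 1 ⊆ Set.Icc (0:ℝ) 1 := by
    rw [Set.uIoc_of_le zero_le_one]; exact Set.Ioc_subset_Icc_self
  have hzb : z ∈ Metric.ball z δ := Metric.mem_ball_self hδpos
  have hmeas : ∀ᶠ (x : ℂ) in nhds z, AEStronglyMeasurable
      (fun t : ℝ => h (z₀ + (t:ℂ)*(x - z₀))) (volume.restrict (Set.uIoc (0:ℝ) 1)) := by
    filter_upwards [Metric.ball_mem_nhds z hδpos] with x hx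
    apply ContinuousOn.aestronglyMeasurable _ measurableSet_uIoc
    apply (hhc.mono hδ).comp (by fun_prop : Continuous fun t : ℝ => z₀ + (t:ℂ)*(x - z₀)).continuousOn
    exact fun t ht => hmem x hx t (hIsub ht)
  have hint : IntervalIntegrable (fun t : ℝ => h (z₀ + (t:ℂ)*(z - z₀))) volume 0 1 := by
    apply ContinuousOn.intervalIntegrable
    apply (hhc.mono hδ).comp (by fun_prop : Continuous fun t : ℝ => z₀ + (t:ℂ)*(z - z₀)).continuousOn
    intro t ht
    exact hmem z hzb t (by rwa [Set.uIcc_of_le zero_le_one] at ht)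
  have hmeas' : AEStronglyMeasurable
      (fun t : ℝ => deriv h (z₀ + (t:ℂ)*(z - z₀)) * (t:ℂ)) (volume.restrict (Set.uIoc (0:ℝ) 1)) := by
    apply ContinuousOn.aestronglyMeasurable _ measurableSet_uIoc
    apply ContinuousOn.mul _ (by fun_prop : Continuous fun t : ℝ => ((t:ℂ))).continuousOn
    apply (hdc.mono hδ).comp (by fun_prop : Continuous fun t : ℝ => z₀ + (t:ℂ)*(z - z₀)).continuousOn
    exact fun t ht => hmem z hzb t (hIsub ht)
  have hbnd : ∀ᵐ (t : ℝ) ∂volume, t ∈ Set.uIoc (0:ℝ) 1 → ∀ x ∈ Metric.ball z δ,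
      ‖deriv h (z₀ + (t:ℂ)*(x - z₀)) * (t:ℂ)‖ ≤ |C₁| := by
    refine ae_of_all _ fun t ht x hx => ?_
    have htI : t ∈ Set.Icc (0:ℝ) 1 := hIsub ht
    have h1 : ‖deriv h (z₀ + (t:ℂ)*(x - z₀))‖ ≤ C₁ := hC₁ _ (hmem x hx t htI)
    calc ‖deriv h (z₀ + (t:ℂ)*(x - z₀)) * (t:ℂ)‖
        = ‖deriv h (z₀ + (t:ℂ)*(x - z₀))‖ * |t| := by
          rw [norm_mul, Complex.norm_real, Real.norm_eq_abs]
      _ ≤ C₁ * 1 := by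
          apply mul_le_mul h1 _ (abs_nonneg t) ((norm_nonneg _).trans h1)
          rw [_root_.abs_of_nonneg htI.1]; exact htI.2
      _ ≤ |C₁| := by rw [mul_one]; exact le_abs_self C₁
  have hdiff : ∀ᵐ (t : ℝ) ∂volume, t ∈ Set.uIoc (0:ℝ) 1 → ∀ x ∈ Metric.ball z δ,
      HasDerivAt (fun x : ℂ => h (z₀ + (t:ℂ)*(x - z₀)))
        (deriv h (z₀ + (t:ℂ)*(x - z₀)) * (t:ℂ)) x := by
    refine ae_of_all _ fun t ht x hx => ?_
    have htI : t ∈ Set.Icc (0:ℝ) 1 := hIsub ht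
    have hγ : z₀ + (t:ℂ)*(x - z₀) ∈ Ω := hδ (hmem x hx t htI)
    have h1 : HasDerivAt (fun w : ℂ => z₀ + (t:ℂ)*(w - z₀)) (t:ℂ) x := by
      simpa using (((hasDerivAt_id x).sub_const z₀).const_mul (t:ℂ)).const_add z₀
    have h2 : HasDerivAt h (deriv h (z₀ + (t:ℂ)*(x - z₀))) (z₀ + (t:ℂ)*(x - z₀)) :=
      (hh.differentiableAt (hΩopen.mem_nhds hγ)).hasDerivAt
    exact h2.comp x h1
  have key := intervalIntegral.hasDerivAt_integral_of_dominated_loc_of_deriv_le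
    (F := fun (x : ℂ) (t : ℝ) => h (z₀ + (t:ℂ)*(x - z₀)))
    (F' := fun (x : ℂ) (t : ℝ) => deriv h (z₀ + (t:ℂ)*(x - z₀)) * (t:ℂ))
    (x₀ := z) (a := 0) (b := 1) (μ := MeasureTheory.volume) (bound := fun _ => |C₁|) (Metric.ball_mem_nhds z hδpos)
    hmeas hint hmeas' hbnd intervalIntegrable_const hdiff
  -- now key.2 : HasDerivAt (fun x => ∫ ...) (∫ F' z t) z
  have hprod : HasDerivAt (fun w => segIntegral z₀ w h)
      (1 * (∫ t in (0:ℝ)..1, h (z₀ + (t:ℂ)*(z - z₀))) +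
        (z - z₀) * ∫ t in (0:ℝ)..1, deriv h (z₀ + (t:ℂ)*(z - z₀)) * (t:ℂ)) z := by
    exact ((hasDerivAt_id z).sub_const z₀).mul key.2
  -- identify the derivative with h z via FTC in t
  have hγmem : ∀ t ∈ Set.Icc (0:ℝ) 1, z₀ + (t:ℂ)*(z - z₀) ∈ Ω :=
    fun t ht => hseg (seg_mem_param ht)
  have hγc : Continuous (fun t : ℝ => z₀ + (t:ℂ)*(z - z₀)) := by fun_prop
  have hDc : ContinuousOn (fun t : ℝ =>
      h (z₀ + (t:ℂ)*(z - z₀)) + (t:ℂ) * (deriv h (z₀ + (t:ℂ)*(z - z₀)) * (z - z₀)))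
      (Set.Icc (0:ℝ) 1) := by
    apply ContinuousOn.add
    · exact hhc.comp hγc.continuousOn hγmem
    · apply ContinuousOn.mul (by fun_prop : Continuous fun t : ℝ => ((t:ℂ))).continuousOn
      exact ((hdc.comp hγc.continuousOn hγmem).mul continuousOn_const)
  have ftc : (∫ t in (0:ℝ)..1,
      (h (z₀ + (t:ℂ)*(z - z₀)) + (t:ℂ) * (deriv h (z₀ + (t:ℂ)*(z - z₀)) * (z - z₀)))) = h z := by
    have hd : ∀ t ∈ Set.uIcc (0:ℝ) 1, HasDerivAt (fun t : ℝ => (t:ℂ) * h (z₀ + (t:ℂ)*(z - z₀)))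
        (h (z₀ + (t:ℂ)*(z - z₀)) + (t:ℂ) * (deriv h (z₀ + (t:ℂ)*(z - z₀)) * (z - z₀))) t := by
      intro t ht
      rw [Set.uIcc_of_le zero_le_one] at ht
      have d1 : HasDerivAt (fun t : ℝ => ((t:ℝ):ℂ)) 1 t := by
        exact Complex.ofRealCLM.hasDerivAt (x := t)
      have hψ : HasDerivAt (fun w : ℂ => z₀ + w * (z - z₀)) (z - z₀) ((t:ℝ):ℂ) := by
        simpa using ((hasDerivAt_id ((t:ℝ):ℂ)).mul_const (z - z₀)).const_add z₀
      have h2 : HasDerivAt h (deriv h (z₀ + (t:ℂ)*(z - z₀))) (z₀ + (t:ℂ)*(z - z₀)) :=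
        (hh.differentiableAt (hΩopen.mem_nhds (hγmem t ht))).hasDerivAt
      have d2 : HasDerivAt (fun t : ℝ => h (z₀ + (t:ℂ)*(z - z₀)))
          (deriv h (z₀ + (t:ℂ)*(z - z₀)) * (z - z₀)) t :=
        (h2.comp ((t:ℝ):ℂ) hψ).comp_ofReal
      have := d1.mul d2; simp only [one_mul] at this; exact this
    rw [intervalIntegral.integral_eq_sub_of_hasDerivAt hd
      (hDc.intervalIntegrable_of_Icc zero_le_one)]
    have e1 : z₀ + ((1:ℝ):ℂ)*(z - z₀) = z := by push_cast; ring
    simp [e1]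
  have hint1 : IntervalIntegrable (fun t : ℝ => h (z₀ + (t:ℂ)*(z - z₀))) volume 0 1 :=
    (hhc.comp hγc.continuousOn hγmem).intervalIntegrable_of_Icc zero_le_one
  have hint2 : IntervalIntegrable
      (fun t : ℝ => (t:ℂ) * (deriv h (z₀ + (t:ℂ)*(z - z₀)) * (z - z₀))) volume 0 1 := by
    apply ContinuousOn.intervalIntegrable_of_Icc zero_le_one
    exact ContinuousOn.mul (by fun_prop : Continuous fun t : ℝ => ((t:ℂ))).continuousOn
      ((hdc.comp hγc.continuousOn hγmem).mul continuousOn_const)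
  have value : 1 * (∫ t in (0:ℝ)..1, h (z₀ + (t:ℂ)*(z - z₀))) +
      (z - z₀) * (∫ t in (0:ℝ)..1, deriv h (z₀ + (t:ℂ)*(z - z₀)) * (t:ℂ)) = h z := by
    have e2 : (∫ t in (0:ℝ)..1, (z - z₀) * (deriv h (z₀ + (t:ℂ)*(z - z₀)) * (t:ℂ))) =
        ∫ t in (0:ℝ)..1, (t:ℂ) * (deriv h (z₀ + (t:ℂ)*(z - z₀)) * (z - z₀)) :=
      intervalIntegral.integral_congr fun t _ => by ring
    rw [one_mul, ← intervalIntegral.integral_const_mul, e2,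
      ← intervalIntegral.integral_add hint1 hint2, ftc]
  rwa [value] at hprod

/-- Along a progressive segment (`Re z₁ > Re z₀`), the composed
operator `J ∘ I₊` is bounded by `Cε` in the norm `‖·‖`, uniformly in `ε ∈ (0,1]`. -/
theorem wkb_J_Iplus_bound
    (Ω : Set ℂ) (hΩopen : IsOpen Ω) (hΩbdd : Bornology.IsBounded Ω)
    (hΩconv : Convex ℝ Ω)
    (H : ℂ → ℂ) (hH : DifferentiableOn ℂ H Ω)
    (hHbdd : ∃ M, ∀ ζ ∈ Ω, ‖H ζ‖ ≤ M)
    (z₀ z₁ : ℂ) (hz₀ : z₀ ∈ Ω) (hz₁ : z₁ ∈ Ω) (hprog : z₀.re < z₁.re) :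
    ∃ C : ℝ, 0 < C ∧
      ∀ ε : ℝ, 0 < ε → ε ≤ 1 →
      ∀ f : ℂ → ℂ, DifferentiableOn ℂ f Ω →
        wkbNorm ε z₀ z₁ (wkbJ H z₀ (wkbIplus H z₀ ε f)) ≤
          C * ε * wkbNorm ε z₀ z₁ f := by
  obtain ⟨M₀, hM₀⟩ := hHbdd
  set M := max M₀ 1 with hM
  have hM1 : (1:ℝ) ≤ M := le_max_right _ _
  have hMpos : (0:ℝ) < M := lt_of_lt_of_le one_pos hM1
  have hHM : ∀ ζ ∈ Ω, ‖H ζ‖ ≤ M := fun ζ hζ => (hM₀ ζ hζ).trans (le_max_left _ _)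
  set a := z₁.re - z₀.re with ha
  have hapos : 0 < a := sub_pos.2 hprog
  have hrea : (z₁ - z₀).re = a := by rw [Complex.sub_re]
  have haL : a ≤ ‖z₁ - z₀‖ := by
    rw [← hrea]; exact Complex.re_le_norm (z₁ - z₀)
  set L := ‖z₁ - z₀‖ with hL
  have hLpos : 0 < L := lt_of_lt_of_le hapos haL
  have hseg : segment ℝ z₀ z₁ ⊆ Ω := hΩconv.segment_subset hz₀ hz₁
  have hCpos : 0 < L*(L+1)*M^2/(2*a) := by
    apply div_pos (mul_pos (mul_pos hLpos (by linarith)) (pow_pos hMpos 2)) (by linarith)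
  refine ⟨L*(L+1)*M^2/(2*a), hCpos, ?_⟩
  intro ε hε hε1 f hf
  have hIsub : Set.uIoc (0:ℝ) 1 ⊆ Set.Icc (0:ℝ) 1 := by
    rw [Set.uIoc_of_le zero_le_one]; exact Set.Ioc_subset_Icc_self
  -- sup of |f| on the segment
  set S := sSup ((fun ζ => ‖f ζ‖) '' segment ℝ z₀ z₁) with hS
  have hfc : ContinuousOn (fun ζ => ‖f ζ‖) (segment ℝ z₀ z₁) :=
    continuous_norm.comp_continuousOn ((hf.continuousOn).mono hseg)
  have hbdd : BddAbove ((fun ζ => ‖f ζ‖) '' segment ℝ z₀ z₁) :=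
    ((isCompact_seg z₀ z₁).image_of_continuousOn hfc).bddAbove
  have hfS : ∀ ζ ∈ segment ℝ z₀ z₁, ‖f ζ‖ ≤ S :=
    fun ζ hζ => le_csSup hbdd (Set.mem_image_of_mem _ hζ)
  have hS0 : 0 ≤ S := Real.sSup_nonneg fun x hx => by
    obtain ⟨ζ, _, rfl⟩ := hx; exact norm_nonneg _
  have hSN : S ≤ wkbNorm ε z₀ z₁ f := by
    have h2 : 0 ≤ sSup ((fun ζ => ‖deriv f ζ‖) '' segment ℝ z₀ z₁) :=
      Real.sSup_nonneg fun x hx => by obtain ⟨ζ, _, rfl⟩ := hx; exact norm_nonneg _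
    unfold wkbNorm
    nlinarith
  -- sub-segment membership
  have hsub : ∀ {s : ℝ}, s ∈ Set.Icc (0:ℝ) 1 → ∀ {t : ℝ}, t ∈ Set.Icc (0:ℝ) 1 →
      z₀ + (t:ℂ) * ((z₀ + (s:ℂ)*(z₁ - z₀)) - z₀) ∈ segment ℝ z₀ z₁ := by
    intro s hs t ht
    have e : z₀ + (t:ℂ) * ((z₀ + (s:ℂ)*(z₁ - z₀)) - z₀) = z₀ + ((t*s : ℝ):ℂ) * (z₁ - z₀) := by
      push_cast; ring
    rw [e]
    refine seg_mem_param ⟨mul_nonneg ht.1 hs.1, ?_⟩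
    nlinarith [ht.1, ht.2, hs.1, hs.2]
  set g := wkbIplus H z₀ ε f with hg
  set B := ε * (L/(2*a)) * (M*S) with hB
  have hB0 : 0 ≤ B :=
    mul_nonneg (mul_nonneg hε.le (by positivity)) (mul_nonneg hMpos.le hS0)
  -- key bound on g along the segment
  have hgb : ∀ z ∈ segment ℝ z₀ z₁, ‖g z‖ ≤ B := by
    intro z hzm
    obtain ⟨s, hs, rfl⟩ := seg_param_of_mem hzm
    rcases eq_or_lt_of_le hs.1 with hs0 | hs0
    · have e0 : z₀ + ((s:ℝ):ℂ)*(z₁ - z₀) = z₀ := by rw [← hs0]; push_cast; ring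
      rw [hg]
      unfold wkbIplus
      rw [e0]
      simpa using hB0
    · set c := 2*s*a/ε with hc
      have hcpos : 0 < c := by rw [hc]; positivity
      have hbint : ∀ t ∈ Set.uIoc (0:ℝ) 1,
          ‖Complex.exp (2 * ((z₀ + (t:ℂ) * ((z₀ + (s:ℂ)*(z₁ - z₀)) - z₀)) - (z₀ + (s:ℂ)*(z₁ - z₀))) / (ε:ℂ)) *
              H (z₀ + (t:ℂ) * ((z₀ + (s:ℂ)*(z₁ - z₀)) - z₀)) *
              f (z₀ + (t:ℂ) * ((z₀ + (s:ℂ)*(z₁ - z₀)) - z₀))‖ ≤ Real.exp (c*(t-1)) * (M*S) := by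
        intro t ht
        have htI : t ∈ Set.Icc (0:ℝ) 1 := hIsub ht
        have hγseg : z₀ + (t:ℂ) * ((z₀ + (s:ℂ)*(z₁ - z₀)) - z₀) ∈ segment ℝ z₀ z₁ := hsub hs htI
        have hγΩ := hseg hγseg
        have hre : (2 * ((z₀ + (t:ℂ) * ((z₀ + (s:ℂ)*(z₁ - z₀)) - z₀)) - (z₀ + (s:ℂ)*(z₁ - z₀))) / (ε:ℂ)).re
            = c*(t-1) := by
          have e : 2 * ((z₀ + (t:ℂ) * ((z₀ + (s:ℂ)*(z₁ - z₀)) - z₀)) - (z₀ + (s:ℂ)*(z₁ - z₀))) / (ε:ℂ)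
              = ((2*s*(t-1)/ε : ℝ):ℂ) * (z₁ - z₀) := by
            push_cast
            field_simp
            ring
          rw [e, Complex.re_ofReal_mul, hrea, hc]
          field_simp
        rw [norm_mul, norm_mul,
          Complex.norm_exp, hre, mul_assoc]
        apply mul_le_mul_of_nonneg_left _ (Real.exp_nonneg _)
        exact mul_le_mul (hHM _ hγΩ) (hfS _ hγseg) (norm_nonneg _) hMpos.le
      have hbcont : IntervalIntegrable (fun t => Real.exp (c*(t-1)) * (M*S)) volume 0 1 :=
        Continuous.intervalIntegrable (by fun_prop) 0 1
      have hIb := intervalIntegral.norm_integral_le_of_norm_le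
        zero_le_one (ae_of_all _ fun t ht => hbint t (by rw [Set.uIoc_of_le zero_le_one]; exact ht)) hbcont
      have hIval : |∫ t in (0:ℝ)..1, Real.exp (c*(t-1)) * (M*S)| ≤ (M*S)/c := by
        rw [_root_.abs_of_nonneg (intervalIntegral.integral_nonneg zero_le_one
          (fun t _ => mul_nonneg (Real.exp_nonneg _) (mul_nonneg hMpos.le hS0)))]
        rw [intervalIntegral.integral_mul_const]
        calc (∫ t in (0:ℝ)..1, Real.exp (c*(t-1))) * (M*S) ≤ (1/c)*(M*S) :=
              mul_le_mul_of_nonneg_right (exp_integral_le hcpos) (mul_nonneg hMpos.le hS0)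
          _ = (M*S)/c := by ring
      have habs : ‖(z₀ + (s:ℂ)*(z₁ - z₀)) - z₀‖ = s * L := by
        rw [show (z₀ + (s:ℂ)*(z₁-z₀)) - z₀ = (s:ℂ)*(z₁-z₀) from by ring, norm_mul,
          Complex.norm_real, Real.norm_eq_abs, _root_.abs_of_nonneg hs.1]
      rw [hg]
      unfold wkbIplus
      rw [norm_mul, habs]
      have hsne : s ≠ 0 := hs0.ne'
      have hane : a ≠ 0 := hapos.ne'
      have hεne : ε ≠ 0 := hε.ne'
      calc s * L * ‖∫ t in (0:ℝ)..1,
              Complex.exp (2 * ((z₀ + (t:ℂ) * ((z₀ + (s:ℂ)*(z₁ - z₀)) - z₀)) - (z₀ + (s:ℂ)*(z₁ - z₀))) / (ε:ℂ)) *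
              H (z₀ + (t:ℂ) * ((z₀ + (s:ℂ)*(z₁ - z₀)) - z₀)) *
              f (z₀ + (t:ℂ) * ((z₀ + (s:ℂ)*(z₁ - z₀)) - z₀))‖
            ≤ s * L * ((M*S)/c) := by
            apply mul_le_mul_of_nonneg_left (le_trans (hIb.trans (le_abs_self _)) hIval)
              (mul_nonneg hs.1 hLpos.le)
        _ = B := by rw [hB, hc]; field_simp
  -- differentiability of g on Ω
  have hgrep : g = fun z => Complex.exp (-(2*z/(ε:ℂ))) *
      segIntegral z₀ z (fun ζ => Complex.exp (2*ζ/(ε:ℂ)) * H ζ * f ζ) := by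
    funext z
    rw [hg]
    unfold wkbIplus segIntegral
    rw [show Complex.exp (-(2*z/(ε:ℂ))) * ((z - z₀) * ∫ t in (0:ℝ)..1,
        Complex.exp (2*(z₀ + (t:ℂ)*(z - z₀))/(ε:ℂ)) * H (z₀ + (t:ℂ)*(z - z₀)) * f (z₀ + (t:ℂ)*(z - z₀)))
      = (z - z₀) * (Complex.exp (-(2*z/(ε:ℂ))) * ∫ t in (0:ℝ)..1,
        Complex.exp (2*(z₀ + (t:ℂ)*(z - z₀))/(ε:ℂ)) * H (z₀ + (t:ℂ)*(z - z₀)) * f (z₀ + (t:ℂ)*(z - z₀)))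
      from by ring]
    congr 1
    rw [← intervalIntegral.integral_const_mul]
    apply intervalIntegral.integral_congr
    intro t _
    have e : Complex.exp (2 * ((z₀ + (t:ℂ)*(z - z₀)) - z) / (ε:ℂ))
        = Complex.exp (-(2*z/(ε:ℂ))) * Complex.exp (2*(z₀ + (t:ℂ)*(z - z₀))/(ε:ℂ)) := by
      rw [← Complex.exp_add]
      congr 1
      ring
    simp only [e]
    ring
  have h₁diff : DifferentiableOn ℂ (fun ζ => Complex.exp (2*ζ/(ε:ℂ)) * H ζ * f ζ) Ω := by
    apply DifferentiableOn.mul _ hf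
    apply DifferentiableOn.mul _ hH
    apply Differentiable.differentiableOn
    exact ((differentiable_id.const_mul 2).div_const _).cexp
  have hgdiff : ∀ z ∈ Ω, DifferentiableAt ℂ g z := by
    intro z hzΩ
    rw [hgrep]
    apply DifferentiableAt.mul
    · exact (((differentiable_id.const_mul 2).div_const _).neg.cexp).differentiableAt
    · exact (segIntegral_hasDerivAt hΩopen hΩconv h₁diff hz₀ hzΩ).differentiableAt
  have hHg : DifferentiableOn ℂ (fun ζ => H ζ * g ζ) Ω :=
    hH.mul (fun z hzΩ => (hgdiff z hzΩ).differentiableWithinAt)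
  have hJd : ∀ z ∈ Ω, HasDerivAt (wkbJ H z₀ g) (H z * g z) z :=
    fun z hzΩ => segIntegral_hasDerivAt hΩopen hΩconv hHg hz₀ hzΩ
  -- bound on J g along the segment
  have hJb : ∀ z ∈ segment ℝ z₀ z₁, ‖wkbJ H z₀ g z‖ ≤ L*(M*B) := by
    intro z hzm
    obtain ⟨s, hs, rfl⟩ := seg_param_of_mem hzm
    have habs : ‖(z₀ + (s:ℂ)*(z₁ - z₀)) - z₀‖ = s * L := by
      rw [show (z₀ + (s:ℂ)*(z₁-z₀)) - z₀ = (s:ℂ)*(z₁-z₀) from by ring, norm_mul,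
        Complex.norm_real, Real.norm_eq_abs, _root_.abs_of_nonneg hs.1]
    unfold wkbJ segIntegral
    rw [norm_mul, habs]
    have hIc : ‖∫ t in (0:ℝ)..1, H (z₀ + (t:ℂ) * ((z₀ + (s:ℂ)*(z₁ - z₀)) - z₀)) *
        g (z₀ + (t:ℂ) * ((z₀ + (s:ℂ)*(z₁ - z₀)) - z₀))‖ ≤ (M*B) * |1 - 0| := by
      apply intervalIntegral.norm_integral_le_of_norm_le_const
      intro t ht
      have htI : t ∈ Set.Icc (0:ℝ) 1 := hIsub ht
      have hγseg := hsub hs htI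
      rw [norm_mul]
      exact mul_le_mul (hHM _ (hseg hγseg)) (hgb _ hγseg) (norm_nonneg _) hMpos.le
    rw [show |(1:ℝ) - 0| = 1 by norm_num, mul_one] at hIc
    have hsL : s * L ≤ L := by nlinarith [hs.1, hs.2, hLpos.le]
    exact mul_le_mul hsL hIc (norm_nonneg _) hLpos.le
  have hJdb : ∀ z ∈ segment ℝ z₀ z₁, ‖deriv (wkbJ H z₀ g) z‖ ≤ M*B := by
    intro z hzm
    rw [(hJd z (hseg hzm)).deriv, norm_mul]
    exact mul_le_mul (hHM _ (hseg hzm)) (hgb _ hzm) (norm_nonneg _) hMpos.le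
  have hT1 : sSup ((fun ζ => ‖(wkbJ H z₀ g) ζ‖) '' segment ℝ z₀ z₁) ≤ L*(M*B) :=
    Real.sSup_le (fun x hx => by obtain ⟨ζ, hζ, rfl⟩ := hx; exact hJb ζ hζ)
      (mul_nonneg hLpos.le (mul_nonneg hMpos.le hB0))
  have hT2 : sSup ((fun ζ => ‖deriv (wkbJ H z₀ g) ζ‖) '' segment ℝ z₀ z₁) ≤ M*B :=
    Real.sSup_le (fun x hx => by obtain ⟨ζ, hζ, rfl⟩ := hx; exact hJdb ζ hζ)
      (mul_nonneg hMpos.le hB0)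
  have hnorm : wkbNorm ε z₀ z₁ (wkbJ H z₀ g) ≤ L*(M*B) + ε*(M*B) := by
    unfold wkbNorm
    exact add_le_add hT1 (mul_le_mul_of_nonneg_left hT2 hε.le)
  have hfin : L*(M*B) + ε*(M*B) ≤ (L*(L+1)*M^2/(2*a))*ε*S := by
    have e : (L*(L+1)*M^2/(2*a))*ε*S = (L+1)*(M*B) := by
      rw [hB]; field_simp
    rw [e]
    nlinarith [mul_nonneg (mul_nonneg (sub_nonneg.2 hε1) hMpos.le) hB0]
  calc wkbNorm ε z₀ z₁ (wkbJ H z₀ g) ≤ L*(M*B) + ε*(M*B) := hnorm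
    _ ≤ (L*(L+1)*M^2/(2*a))*ε*S := hfin
    _ ≤ L*(L+1)*M^2/(2*a)*ε* wkbNorm ε z₀ z₁ f := by
        apply mul_le_mul_of_nonneg_left hSN (mul_nonneg hCpos.le hε.le)
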